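/- Let p ≥ 3 be a prime, let t ∈ {1,…,p-2}, let N be a positive multiple of p·(p-1), and let s ∈ ℤ. Then the number Δ_{t,s}^N = |{(x_1,…,x_N) ∈ {0,…,t}^N \ {1,…,t}^N : x_1 + ⋯ + x_N ≡ s (mod p)}| is a multiple of p. -/

import Mathlib

open scoped Classical

noncomputable section

section Aux

variable (p M t : ℕ) (s : ℤ) [NeZero p]

/-- the invariant predicate -/
def myP (x : ZMod p → Fin M → Fin (t + 1)) : Prop :=
  (∃ a j, ((x a j : ℕ)) = 0) ∧
    Int.ModEq (p : ℤ) (∑ a, ∑ j, ((x a j : ℕ) : ℤ)) s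

lemma myP_shift (g : ZMod p) (x : ZMod p → Fin M → Fin (t + 1)) (hx : myP p M t s x) :
    myP p M t s (fun a => x (a + g)) := by
  obtain ⟨⟨a, j, hz⟩, hs⟩ := hx
  refine ⟨⟨a - g, j, by simpa using hz⟩, ?_⟩
  have hsum : (∑ a, ∑ j, ((x (a + g) j : ℕ) : ℤ)) = ∑ a, ∑ j, ((x a j : ℕ) : ℤ) :=
    Fintype.sum_equiv (Equiv.addRight g) _ _ (fun a => rfl)
  rwa [hsum]

instance mySMul : SMul (Multiplicative (ZMod p)) {x : ZMod p → Fin M → Fin (t + 1) // myP p M t s x} :=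
  ⟨fun g x => ⟨fun a => x.1 (a + g.toAdd), myP_shift p M t s g.toAdd x.1 x.2⟩⟩

instance myAct : MulAction (Multiplicative (ZMod p))
    {x : ZMod p → Fin M → Fin (t + 1) // myP p M t s x} where
  one_smul x := Subtype.ext (funext fun a => by
    show x.1 (a + Multiplicative.toAdd 1) = x.1 a
    simp)
  mul_smul g h x := Subtype.ext (funext fun a => by
    show x.1 (a + Multiplicative.toAdd (g * h)) = x.1 (a + Multiplicative.toAdd g + Multiplicative.toAdd h)
    rw [toAdd_mul, add_assoc, add_comm (Multiplicative.toAdd g)])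

end Aux

section Aux2

variable (p M t : ℕ) (s : ℤ) [NeZero p]

lemma mem_fixed_iff (x : {x : ZMod p → Fin M → Fin (t + 1) // myP p M t s x})
    (hx : x ∈ MulAction.fixedPoints (Multiplicative (ZMod p)) _) (a : ZMod p) :
    x.1 a = x.1 0 := by
  have h : x.1 (0 + Multiplicative.toAdd (Multiplicative.ofAdd a)) = x.1 0 :=
    congrFun (congrArg Subtype.val (hx (Multiplicative.ofAdd a))) 0
  simpa using h

def myQ (y : Fin M → Fin (t + 1)) : Prop :=
  (∃ j, ((y j : ℕ)) = 0) ∧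
    Int.ModEq (p : ℤ) ((p : ℤ) * ∑ j, ((y j : ℕ) : ℤ)) s

def fixedEquiv :
    MulAction.fixedPoints (Multiplicative (ZMod p))
      {x : ZMod p → Fin M → Fin (t + 1) // myP p M t s x} ≃
    {y : Fin M → Fin (t + 1) // myQ p M t s y} where
  toFun x := ⟨x.1.1 0, by
    obtain ⟨⟨a, j, hz⟩, hs⟩ := x.1.2
    have hc := mem_fixed_iff p M t s x.1 x.2
    refine ⟨⟨j, by rw [← hc a]; exact hz⟩, ?_⟩
    have : (∑ a, ∑ j, ((x.1.1 a j : ℕ) : ℤ)) = (p : ℤ) * ∑ j, ((x.1.1 0 j : ℕ) : ℤ) := by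
      rw [Finset.sum_congr rfl (fun a _ => by rw [hc a]), Finset.sum_const,
        Finset.card_univ, ZMod.card, nsmul_eq_mul]
    rwa [this] at hs⟩
  invFun y := ⟨⟨fun _ => y.1, by
    obtain ⟨⟨j, hz⟩, hs⟩ := y.2
    refine ⟨⟨0, j, hz⟩, ?_⟩
    have : (∑ _a : ZMod p, ∑ j, ((y.1 j : ℕ) : ℤ)) = (p : ℤ) * ∑ j, ((y.1 j : ℕ) : ℤ) := by
      rw [Finset.sum_const, Finset.card_univ, ZMod.card, nsmul_eq_mul]
    rwa [this]⟩, by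
    intro g
    exact Subtype.ext (funext fun a => rfl)⟩
  left_inv x := by
    refine Subtype.ext (Subtype.ext (funext fun a => ?_))
    exact (mem_fixed_iff p M t s x.1 x.2 a).symm
  right_inv y := Subtype.ext rfl

end Aux2

theorem stmt14 (p : ℕ) (hp : p.Prime) (hp3 : 3 ≤ p)
    (t : ℕ) (ht1 : 1 ≤ t) (ht2 : t ≤ p - 2)
    (N : ℕ) (hN : 0 < N) (hdvd : p * (p - 1) ∣ N) (s : ℤ) :
    p ∣ (Finset.univ.filter fun x : Fin N → Fin (t + 1) =>
      (∃ i, (x i : ℕ) = 0) ∧ Int.ModEq (p : ℤ) (∑ i, ((x i : ℕ) : ℤ)) s).card := by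
  haveI : Fact p.Prime := ⟨hp⟩
  haveI : NeZero p := ⟨hp.ne_zero⟩
  obtain ⟨k, hk⟩ := hdvd
  obtain ⟨M, hM, hNM⟩ : ∃ M, M = (p - 1) * k ∧ N = p * M :=
    ⟨(p - 1) * k, rfl, by rw [hk, mul_assoc]⟩
  -- Fermat: p ∣ (t+1)^M - t^M  (done early, before card terms poison omega)
  have hfer : p ∣ (t + 1) ^ M - t ^ M := by
    have htlt : t < p := by omega
    have ht1lt : t + 1 < p := by omega
    have hta : ((t : ℕ) : ZMod p) ≠ 0 := by
      rw [Ne, ZMod.natCast_eq_zero_iff]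
      intro h
      have := Nat.le_of_dvd (by omega) h
      omega
    have htb : (((t + 1 : ℕ)) : ZMod p) ≠ 0 := by
      rw [Ne, ZMod.natCast_eq_zero_iff]
      intro h
      have := Nat.le_of_dvd (by omega) h
      omega
    have hpow : ∀ a : ZMod p, a ≠ 0 → a ^ M = 1 := by
      intro a ha
      rw [hM, pow_mul, ZMod.pow_card_sub_one_eq_one ha, one_pow]
    have hcast : (((t + 1) ^ M : ℕ) : ZMod p) = ((t ^ M : ℕ) : ZMod p) := by
      push_cast
      rw [hpow _ (by push_cast at htb ⊢; exact htb), hpow _ hta]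
    have hmodeq : t ^ M ≡ (t + 1) ^ M [MOD p] :=
      ((ZMod.natCast_eq_natCast_iff _ _ _).mp hcast).symm
    exact (Nat.modEq_iff_dvd' (Nat.pow_le_pow_left (by omega) M)).mp hmodeq
  -- index equivalence
  let idx : ZMod p × Fin M ≃ Fin N :=
    ((Fintype.equivFinOfCardEq (ZMod.card p)).prodCongr (Equiv.refl (Fin M))).trans
      (finProdFinEquiv.trans (finCongr hNM.symm))
  let E : (Fin N → Fin (t + 1)) ≃ (ZMod p → Fin M → Fin (t + 1)) :=
    (Equiv.arrowCongr idx (Equiv.refl (Fin (t + 1)))).symm.trans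
      (Equiv.curry _ _ _)
  have hE : ∀ (x : Fin N → Fin (t + 1)) (a : ZMod p) (j : Fin M),
      E x a j = x (idx (a, j)) := fun _ _ _ => rfl
  have hsum : ∀ x : Fin N → Fin (t + 1),
      (∑ i, ((x i : ℕ) : ℤ)) = ∑ a, ∑ j, ((E x a j : ℕ) : ℤ) := by
    intro x
    simp only [hE]
    rw [← Equiv.sum_comp idx (fun i => ((x i : ℕ) : ℤ)), Fintype.sum_prod_type]
  have hEP : ∀ x : Fin N → Fin (t + 1),
      ((∃ i, (x i : ℕ) = 0) ∧ Int.ModEq (p : ℤ) (∑ i, ((x i : ℕ) : ℤ)) s) ↔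
        myP p M t s (E x) := by
    intro x
    unfold myP
    rw [← hsum x]
    constructor
    · rintro ⟨⟨i, hi⟩, hs⟩
      refine ⟨⟨(idx.symm i).1, (idx.symm i).2, ?_⟩, hs⟩
      rw [hE, show ((idx.symm i).1, (idx.symm i).2) = idx.symm i from rfl,
        Equiv.apply_symm_apply]
      exact hi
    · rintro ⟨⟨a, j, hz⟩, hs⟩
      exact ⟨⟨idx (a, j), by rw [hE] at hz; exact hz⟩, hs⟩
  have hcard : (Finset.univ.filter fun x : Fin N → Fin (t + 1) =>
      (∃ i, (x i : ℕ) = 0) ∧ Int.ModEq (p : ℤ) (∑ i, ((x i : ℕ) : ℤ)) s).card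
      = Fintype.card {x : ZMod p → Fin M → Fin (t + 1) // myP p M t s x} := by
    rw [← Fintype.card_subtype]
    exact Fintype.card_congr (Equiv.subtypeEquiv E hEP)
  rw [hcard]
  clear hcard hEP hsum hE
  clear_value idx E
  clear idx E hk hN
  -- p-group fixed point congruence
  have hpg : IsPGroup p (Multiplicative (ZMod p)) :=
    IsPGroup.of_card (n := 1) (by simp [Nat.card_eq_fintype_card, ZMod.card])
  have hmod := hpg.card_modEq_card_fixedPoints
    {x : ZMod p → Fin M → Fin (t + 1) // myP p M t s x}
  rw [Nat.card_eq_fintype_card, Nat.card_eq_fintype_card] at hmod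
  -- p divides the number of fixed points
  have hfix : p ∣ Fintype.card (MulAction.fixedPoints (Multiplicative (ZMod p))
      {x : ZMod p → Fin M → Fin (t + 1) // myP p M t s x}) := by
    rw [Fintype.card_congr (fixedEquiv p M t s)]
    by_cases hps : (p : ℤ) ∣ s
    · -- every y with (∃ j, y j = 0) satisfies myQ
      have hQ : ∀ y : Fin M → Fin (t + 1),
          myQ p M t s y ↔ ∃ j, ((y j : ℕ)) = 0 := by
        intro y
        unfold myQ
        constructor
        · exact fun h => h.1
        · intro h
          refine ⟨h, ?_⟩
          have : (p : ℤ) ∣ s - (p : ℤ) * ∑ j, ((y j : ℕ) : ℤ) :=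
            dvd_sub hps (Dvd.intro _ rfl)
          exact (Int.modEq_iff_dvd.mpr (by simpa using this)).symm.symm
      rw [Fintype.card_congr (Equiv.subtypeEquivRight hQ)]
      -- count = (t+1)^M - t^M
      have hBcard : Fintype.card {y : Fin M → Fin (t + 1) // ¬ ∃ j, ((y j : ℕ)) = 0}
          = t ^ M := by
        have e1 : {y : Fin M → Fin (t + 1) // ¬ ∃ j, ((y j : ℕ)) = 0} ≃
            {y : Fin M → Fin (t + 1) // ∀ j, ((y j : ℕ)) ≠ 0} :=
          Equiv.subtypeEquivRight (fun y => by push_neg; rfl)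
        have e2 : {y : Fin M → Fin (t + 1) // ∀ j, ((y j : ℕ)) ≠ 0} ≃
            ∀ _ : Fin M, {b : Fin (t + 1) // ((b : ℕ)) ≠ 0} :=
          Equiv.subtypePiEquivPi (p := fun (_ : Fin M) (b : Fin (t + 1)) => ((b : ℕ)) ≠ 0)
        rw [Fintype.card_congr e1, Fintype.card_congr e2, Fintype.card_pi]
        have hfib : ∀ j : Fin M,
            Fintype.card {b : Fin (t + 1) // ((b : ℕ)) ≠ 0} = t := by
          intro j
          rw [Fintype.card_subtype_compl, Fintype.card_fin]
          have : Fintype.card {b : Fin (t + 1) // ((b : ℕ)) = 0} = 1 := by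
            rw [Fintype.card_congr (Equiv.subtypeEquivRight
              (q := fun b : Fin (t + 1) => b = 0) (fun b => by
                exact ⟨fun h => Fin.ext h, fun h => by subst h; rfl⟩))]
            exact Fintype.card_subtype_eq (0 : Fin (t + 1))
          omega
        rw [Finset.prod_congr rfl fun j _ => hfib j, Finset.prod_const, Finset.card_univ,
          Fintype.card_fin]
      have hAcard : Fintype.card {y : Fin M → Fin (t + 1) // ∃ j, ((y j : ℕ)) = 0}
          = (t + 1) ^ M - t ^ M := by
        have h1 := Fintype.card_subtype_compl
          (p := fun y : Fin M → Fin (t + 1) => ∃ j, ((y j : ℕ)) = 0)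
        have h2 : Fintype.card (Fin M → Fin (t + 1)) = (t + 1) ^ M := by
          simp [Fintype.card_fun]
        have h3 := Fintype.card_subtype_le
          (p := fun y : Fin M → Fin (t + 1) => ∃ j, ((y j : ℕ)) = 0)
        rw [h2] at h1 h3
        rw [← hBcard, h1]
        exact (Nat.sub_sub_self h3).symm
      rw [hAcard]
      exact hfer
    · -- no fixed points at all
      haveI : IsEmpty {y : Fin M → Fin (t + 1) // myQ p M t s y} := by
        refine ⟨fun y => hps ?_⟩
        obtain ⟨_, hs⟩ := y.2
        have h1 : (p : ℤ) ∣ s - (p : ℤ) * ∑ j, ((y.1 j : ℕ) : ℤ) :=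
          Int.ModEq.dvd hs
        have : s = (s - (p : ℤ) * ∑ j, ((y.1 j : ℕ) : ℤ)) +
            (p : ℤ) * ∑ j, ((y.1 j : ℕ) : ℤ) := by ring
        rw [this]
        exact dvd_add h1 (Dvd.intro _ rfl)
      simp
  exact Nat.modEq_zero_iff_dvd.mp
    (hmod.trans (Nat.modEq_zero_iff_dvd.mpr hfix))
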